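/- For any prime p and distinct integers d_1,...,d_k, ∑ (∏_{i=1}^k μ(q_i)/φ(q_i)) A(q_1,...,q_k) = (1 - 1/p)^{-k} (1 - ν_p(D)/p), where the sum is over tuples (q_1,...,q_k) with each q_i dividing p (i.e., q_i ∈ {1, p}), and ν_p(D) is the number of distinct residue classes mod p among d_1,...,d_k. -/

import Mathlib

open Finset

open Complex


lemma exp_ratio_eq_one_iff (p : ℕ) (hp : 0 < p) (m : ℤ) :
    Complex.exp (2 * Real.pi * I * (m / p)) = 1 ↔ (p:ℤ) ∣ m := by
  rw [Complex.exp_eq_one_iff]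
  constructor
  · rintro ⟨n, hn⟩
    have hp' : (p:ℂ) ≠ 0 := by exact_mod_cast hp.ne'
    have h2 : (2 * Real.pi * I : ℂ) ≠ 0 := by
      simp [Real.pi_ne_zero, Complex.I_ne_zero]
    field_simp at hn
    have hC : (2 * Real.pi * I : ℂ) * m = (2 * Real.pi * I) * (n * p) := by
      linear_combination (2 * Real.pi * I : ℂ) * hn
    have : (m:ℂ) = n * p := mul_left_cancel₀ h2 hC
    have : m = n * p := by exact_mod_cast this
    exact ⟨n, by linarith⟩
  · rintro ⟨n, rfl⟩
    refine ⟨n, ?_⟩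
    have hp' : (p:ℂ) ≠ 0 := by exact_mod_cast hp.ne'
    push_cast
    field_simp

lemma geom_aux (p : ℕ) (hp : 0 < p) (m : ℤ) :
    ∑ t ∈ Finset.range p, Complex.exp (2 * Real.pi * I * (t * m / p)) =
      if (p:ℤ) ∣ m then (p:ℂ) else 0 := by
  set x := Complex.exp (2 * Real.pi * I * (m / p)) with hx
  have hterm : ∀ t : ℕ, Complex.exp (2 * Real.pi * I * (t * m / p)) = x ^ t := by
    intro t
    rw [hx, ← Complex.exp_nat_mul]
    ring_nf
  simp_rw [hterm]
  by_cases h : (p:ℤ) ∣ m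
  · rw [if_pos h]
    have : x = 1 := (exp_ratio_eq_one_iff p hp m).2 h
    simp [this]
  · rw [if_neg h]
    have hx1 : x ≠ 1 := fun hc => h ((exp_ratio_eq_one_iff p hp m).1 hc)
    rw [geom_sum_eq hx1]
    have hxp : x ^ p = 1 := by
      rw [hx, ← Complex.exp_nat_mul]
      have hp' : (p:ℂ) ≠ 0 := by exact_mod_cast hp.ne'
      have : (p:ℂ) * (2 * Real.pi * I * (m / p)) = m * (2 * Real.pi * I) := by
        field_simp
      rw [this, Complex.exp_int_mul_two_pi_mul_I]
    simp [hxp]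

lemma F_aux (p : ℕ) (hp : 0 < p) (m : ℤ) :
    ∑ a ∈ Finset.Icc 1 (p-1), Complex.exp (2 * Real.pi * I * (a * m / p)) =
      (if (p:ℤ) ∣ m then (p:ℂ) else 0) - 1 := by
  have hr : Finset.range p = insert 0 (Finset.Icc 1 (p-1)) := by
    ext x; simp only [Finset.mem_range, Finset.mem_insert, Finset.mem_Icc]; omega
  have h0 : (0:ℕ) ∉ Finset.Icc 1 (p-1) := by simp
  have := geom_aux p hp m
  rw [hr, Finset.sum_insert h0] at this
  simp only [Nat.cast_zero, zero_mul, zero_div, mul_zero, Complex.exp_zero] at this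
  linear_combination this

lemma den_aux (k p : ℕ) (hp : 0 < p) (S : Finset (Fin k)) (a : Fin k → ℕ) :
    (∑ i, (a i : ℚ) / (((if i ∈ S then p else 1 : ℕ)) : ℚ)).den = 1 ↔
      p ∣ ∑ i ∈ S, a i := by
  have hp' : (p:ℚ) ≠ 0 := by exact_mod_cast hp.ne'
  have hsplit : (∑ i, (a i : ℚ) / (((if i ∈ S then p else 1 : ℕ)) : ℚ)) =
      ((∑ i ∈ S, a i + p * ∑ i ∈ Finset.univ \ S, a i : ℕ) : ℚ) / p := by
    rw [eq_div_iff hp', Finset.sum_mul]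
    push_cast
    rw [← Finset.sum_sdiff S.subset_univ, Finset.mul_sum, add_comm]
    congr 1
    · exact Finset.sum_congr rfl fun i hi => by
        rw [if_pos hi]; field_simp
    · exact Finset.sum_congr rfl fun i hi => by
        simp only [Finset.mem_sdiff] at hi
        rw [if_neg hi.2]; ring
  rw [hsplit, Rat.den_div_natCast_eq_one_iff _ _ hp.ne']
  rw [Nat.add_comm]
  exact Nat.dvd_add_right (dvd_mul_right p _)

lemma exp_split (k p : ℕ) (d : Fin k → ℤ) (S : Finset (Fin k)) (t : ℕ) (a : Fin k → ℕ) :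
    Complex.exp (2 * Real.pi * I * ((t : ℂ) * ((∑ i ∈ S, a i : ℕ) : ℂ) / p)) *
      Complex.exp (2 * Real.pi * I *
        ∑ i, (d i : ℂ) * (a i : ℂ) / (((if i ∈ S then p else 1 : ℕ)) : ℂ)) =
    ∏ i, (if i ∈ S then
        Complex.exp (2 * Real.pi * I * (((d i : ℂ) + t) * (a i : ℂ) / p)) else 1) := by
  have h1 : 2 * (Real.pi:ℂ) * I * ((t : ℂ) * ((∑ i ∈ S, a i : ℕ) : ℂ) / p)
      = ∑ i ∈ S, 2 * (Real.pi:ℂ) * I * ((t : ℂ) * (a i : ℂ) / p) := by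
    push_cast
    rw [Finset.mul_sum, Finset.sum_div, Finset.mul_sum]
  have h2 : 2 * (Real.pi:ℂ) * I *
      ∑ i, (d i : ℂ) * (a i : ℂ) / (((if i ∈ S then p else 1 : ℕ)) : ℂ)
      = ∑ i, 2 * (Real.pi:ℂ) * I *
          ((d i : ℂ) * (a i : ℂ) / (((if i ∈ S then p else 1 : ℕ)) : ℂ)) := by
    rw [Finset.mul_sum]
  rw [h1, h2, Complex.exp_sum, Complex.exp_sum]
  have h3 : ∏ x ∈ S, Complex.exp (2 * (Real.pi:ℂ) * I * ((t : ℂ) * (a x : ℂ) / p))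
      = ∏ i, (if i ∈ S then
          Complex.exp (2 * (Real.pi:ℂ) * I * ((t : ℂ) * (a i : ℂ) / p)) else 1) := by
    rw [Finset.prod_ite_mem, Finset.univ_inter]
  rw [h3, ← Finset.prod_mul_distrib]
  refine Finset.prod_congr rfl fun i _ => ?_
  by_cases hi : i ∈ S
  · rw [if_pos hi, if_pos hi, if_pos hi, ← Complex.exp_add]
    congr 1
    push_cast
    ring
  · rw [if_neg hi, if_neg hi, if_neg hi, one_mul]
    have : 2 * (Real.pi:ℂ) * I * ((d i : ℂ) * (a i : ℂ) / ((1:ℕ):ℂ))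
        = ((d i * a i : ℤ) : ℂ) * (2 * Real.pi * I) := by push_cast; ring
    rw [this, Complex.exp_int_mul_two_pi_mul_I]


/-- The Hardy–Littlewood exponential sum `A(q₁,…,q_k)` attached to the tuple `d`. -/
noncomputable def HLA (k : ℕ) (d : Fin k → ℤ) (q : Fin k → ℕ) : ℂ :=
  ∑ a ∈ (Fintype.piFinset fun i => Finset.Icc 1 (q i)).filter
      (fun a => (∀ i, Nat.gcd (a i) (q i) = 1) ∧ (∑ i, (a i : ℚ) / (q i : ℚ)).den = 1),
    Complex.exp (2 * Real.pi * Complex.I * ∑ i, (d i : ℂ) * (a i : ℂ) / (q i : ℂ))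

lemma HLA_aux (k : ℕ) (d : Fin k → ℤ) (p : ℕ) (hp : p.Prime) (S : Finset (Fin k)) :
    HLA k d (fun i => if i ∈ S then p else 1) =
      (p:ℂ)⁻¹ * ∑ t ∈ Finset.range p,
        ∏ i ∈ S, ((if (p:ℤ) ∣ (d i + t) then (p:ℂ) else 0) - 1) := by
  have hp0 : 0 < p := hp.pos
  have hpC : (p:ℂ) ≠ 0 := by exact_mod_cast hp0.ne'
  set good : Fin k → Finset ℕ :=
    fun i => if i ∈ S then Finset.Icc 1 (p-1) else {1} with hgood
  -- Step 1: rewrite the filter set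
  have hset : (Fintype.piFinset fun i => Finset.Icc 1 (if i ∈ S then p else 1)).filter
      (fun a => (∀ i, Nat.gcd (a i) (if i ∈ S then p else 1) = 1) ∧
        (∑ i, (a i : ℚ) / (((if i ∈ S then p else 1 : ℕ)) : ℚ)).den = 1)
      = (Fintype.piFinset good).filter (fun a => p ∣ ∑ i ∈ S, a i) := by
    ext a
    simp only [Finset.mem_filter, Fintype.mem_piFinset]
    rw [den_aux k p hp0 S a]
    constructor
    · rintro ⟨h1, h2, h3⟩
      refine ⟨fun i => ?_, h3⟩
      by_cases hi : i ∈ S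
      · have hm := h1 i; have hg := h2 i
        rw [if_pos hi] at hm hg
        rw [Finset.mem_Icc] at hm
        simp only [hgood, if_pos hi, Finset.mem_Icc]
        have hne : a i ≠ p := by
          intro h
          rw [h, Nat.gcd_self] at hg
          exact hp.one_lt.ne' hg
        omega
      · have hm := h1 i
        rw [if_neg hi] at hm
        simp only [hgood, if_neg hi, Finset.mem_singleton]
        simpa using hm
    · rintro ⟨h1, h3⟩
      have key : ∀ i, a i ∈ Finset.Icc 1 (if i ∈ S then p else 1) ∧
          Nat.gcd (a i) (if i ∈ S then p else 1) = 1 := by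
        intro i
        have hm := h1 i
        by_cases hi : i ∈ S
        · simp only [hgood, if_pos hi, Finset.mem_Icc] at hm
          rw [if_pos hi, Finset.mem_Icc]
          have hnd : ¬ p ∣ a i := by
            intro hdvd
            have := Nat.le_of_dvd (by omega) hdvd
            omega
          exact ⟨⟨hm.1, by omega⟩,
            Nat.coprime_comm.mp (hp.coprime_iff_not_dvd.mpr hnd)⟩
        · simp only [hgood, if_neg hi, Finset.mem_singleton] at hm
          rw [if_neg hi]
          simp [hm]
      exact ⟨fun i => (key i).1, fun i => (key i).2, h3⟩
  rw [HLA, hset, Finset.sum_filter]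
  -- Step 2: indicator via geometric sum
  have hind : ∀ N : ℕ, (if p ∣ N then (1:ℂ) else 0)
      = (p:ℂ)⁻¹ * ∑ t ∈ Finset.range p,
          Complex.exp (2 * Real.pi * I * ((t:ℂ) * (N:ℂ) / p)) := by
    intro N
    have := geom_aux p hp0 (N : ℤ)
    push_cast at this
    rw [this]
    simp only [Int.natCast_dvd_natCast]
    by_cases h : p ∣ N <;> simp [h, hpC]
  have step1 : ∀ a : Fin k → ℕ,
      (if p ∣ ∑ i ∈ S, a i then
        Complex.exp (2 * Real.pi * I * ∑ i, (d i : ℂ) * (a i : ℂ) /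
          (((if i ∈ S then p else 1 : ℕ)) : ℂ)) else 0)
      = (p:ℂ)⁻¹ * ∑ t ∈ Finset.range p,
          Complex.exp (2 * Real.pi * I * ((t:ℂ) * ((∑ i ∈ S, a i : ℕ) : ℂ) / p)) *
            Complex.exp (2 * Real.pi * I * ∑ i, (d i : ℂ) * (a i : ℂ) /
              (((if i ∈ S then p else 1 : ℕ)) : ℂ)) := by
    intro a
    rw [← Finset.sum_mul, ← mul_assoc, ← hind (∑ i ∈ S, a i)]
    by_cases h : p ∣ ∑ i ∈ S, a i <;> simp [h]
  rw [Finset.sum_congr rfl fun a _ => step1 a, ← Finset.mul_sum, Finset.sum_comm]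
  congr 1
  refine Finset.sum_congr rfl fun t _ => ?_
  rw [Finset.sum_congr rfl fun a _ => exp_split k p d S t a, ← Finset.prod_univ_sum good
    (fun i b => if i ∈ S then
      Complex.exp (2 * Real.pi * I * (((d i : ℂ) + (t:ℂ)) * (b : ℂ) / p)) else 1)]
  have hper : ∀ i : Fin k, (∑ b ∈ good i, (if i ∈ S then
        Complex.exp (2 * Real.pi * I * (((d i : ℂ) + t) * (b : ℂ) / p)) else 1))
      = (if i ∈ S then ((if (p:ℤ) ∣ (d i + t) then (p:ℂ) else 0) - 1) else 1) := by
    intro i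
    by_cases hi : i ∈ S
    · simp only [hgood, if_pos hi]
      rw [← F_aux p hp0 (d i + t)]
      refine Finset.sum_congr rfl fun b _ => ?_
      congr 1
      push_cast
      ring
    · simp only [hgood, if_neg hi, Finset.sum_const, Finset.card_singleton, one_smul]
  rw [Finset.prod_congr rfl fun i _ => hper i, Finset.prod_ite_mem, Finset.univ_inter]

/-- Lemma 3, equation (36): the local evaluation of the singular series at `p`. -/
theorem stmt_3 (k : ℕ) (d : Fin k → ℤ) (hd : Function.Injective d)
    (p : ℕ) (hp : p.Prime) :
    ∑ q ∈ Fintype.piFinset (fun _ : Fin k => p.divisors),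
      (∏ i, ((ArithmeticFunction.moebius (q i) : ℤ) : ℂ) / (Nat.totient (q i) : ℂ)) *
        HLA k d q =
    (1 - (p : ℂ)⁻¹)⁻¹ ^ k *
      (1 - ((Finset.univ.image fun i => ((d i : ZMod p))).card : ℂ) / (p : ℂ)) := by
  have hp0 : 0 < p := hp.pos
  haveI : NeZero p := ⟨hp0.ne'⟩
  have hpC : (p:ℂ) ≠ 0 := by exact_mod_cast hp0.ne'
  have hp1C : (p:ℂ) - 1 ≠ 0 := by
    intro h
    have h1 : (p:ℂ) = 1 := by linear_combination h
    have h2 : p = 1 := by exact_mod_cast h1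
    have := hp.one_lt
    omega
  set w : ℂ := -(((p:ℂ) - 1)⁻¹) with hw
  set F : Fin k → ℕ → ℂ :=
    fun i t => (if (p:ℤ) ∣ (d i + t) then (p:ℂ) else 0) - 1 with hF
  -- weight computation
  have hW : ∀ S : Finset (Fin k),
      (∏ i, ((ArithmeticFunction.moebius (if i ∈ S then p else 1) : ℤ) : ℂ) /
        (Nat.totient (if i ∈ S then p else 1) : ℂ)) = ∏ i ∈ S, w := by
    intro S
    rw [show (∏ i ∈ S, w) = ∏ i, (if i ∈ S then w else 1) by
      rw [Finset.prod_ite_mem, Finset.univ_inter]]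
    refine Finset.prod_congr rfl fun i _ => ?_
    by_cases hi : i ∈ S
    · simp only [if_pos hi]
      rw [ArithmeticFunction.moebius_apply_prime hp, Nat.totient_prime hp, hw,
        Nat.cast_sub hp.one_lt.le]
      push_cast
      rw [div_eq_mul_inv]
      ring
    · simp only [if_neg hi]
      simp
  -- reindex the sum over q by subsets S
  have hreindex : ∑ q ∈ Fintype.piFinset (fun _ : Fin k => p.divisors),
      (∏ i, ((ArithmeticFunction.moebius (q i) : ℤ) : ℂ) / (Nat.totient (q i) : ℂ)) *
        HLA k d q
      = ∑ S : Finset (Fin k), (∏ i ∈ S, w) *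
          ((p:ℂ)⁻¹ * ∑ t ∈ Finset.range p, ∏ i ∈ S, F i t) := by
    refine Finset.sum_nbij' (fun q => Finset.univ.filter (fun j => q j = p))
      (fun S i => if i ∈ S then p else 1) (fun q _ => Finset.mem_univ _)
      (fun S _ => ?_) (fun q hq => ?_) (fun S _ => ?_) (fun q hq => ?_)
    · rw [Fintype.mem_piFinset]
      intro i
      rw [hp.divisors]
      by_cases hi : i ∈ S <;> simp [hi]
    · -- left inverse
      rw [Fintype.mem_piFinset] at hq
      funext i
      show (if i ∈ Finset.univ.filter (fun j => q j = p) then p else 1) = q i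
      by_cases hi : i ∈ Finset.univ.filter (fun j => q j = p)
      · rw [if_pos hi]
        exact (Finset.mem_filter.mp hi).2.symm
      · rw [if_neg hi]
        have hqi := hq i
        rw [hp.divisors, Finset.mem_insert, Finset.mem_singleton] at hqi
        rcases hqi with h | h
        · exact h.symm
        · exact absurd (Finset.mem_filter.mpr ⟨Finset.mem_univ i, h⟩) hi
    · -- right inverse
      ext i
      show i ∈ Finset.univ.filter (fun j => (if j ∈ S then p else 1) = p) ↔ i ∈ S
      simp only [Finset.mem_filter, Finset.mem_univ, true_and]
      constructor
      · intro h
        by_contra hi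
        rw [if_neg hi] at h
        exact hp.one_lt.ne h
      · intro h
        rw [if_pos h]
    · -- value equality
      rw [Fintype.mem_piFinset] at hq
      obtain ⟨S', hS'⟩ : ∃ S', Finset.univ.filter (fun j => q j = p) = S' := ⟨_, rfl⟩
      have hqe : q = fun i => if i ∈ S' then p else 1 := by
        funext i
        by_cases hi : i ∈ S'
        · rw [if_pos hi]
          have hi' : i ∈ Finset.univ.filter (fun j => q j = p) := by rw [hS']; exact hi
          exact (Finset.mem_filter.mp hi').2
        · rw [if_neg hi]
          have hqi := hq i
          rw [hp.divisors, Finset.mem_insert, Finset.mem_singleton] at hqi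
          rcases hqi with h | h
          · exact h
          · refine absurd ?_ hi
            rw [← hS']
            exact Finset.mem_filter.mpr ⟨Finset.mem_univ i, h⟩
      have hfix : Finset.univ.filter (fun j => (if j ∈ S' then p else 1) = p) = S' := by
        ext i
        simp only [Finset.mem_filter, Finset.mem_univ, true_and]
        constructor
        · intro h
          by_contra hi
          rw [if_neg hi] at h
          exact hp.one_lt.ne h
        · intro h
          rw [if_pos h]
      show (∏ i, ((ArithmeticFunction.moebius (q i) : ℤ) : ℂ) /
          (Nat.totient (q i) : ℂ)) * HLA k d q
        = (∏ i ∈ Finset.univ.filter (fun j => q j = p), w) *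
            ((p:ℂ)⁻¹ * ∑ t ∈ Finset.range p,
              ∏ i ∈ Finset.univ.filter (fun j => q j = p), F i t)
      rw [hqe, hfix, hW S', HLA_aux k d p hp S']
  rw [hreindex]
  -- collapse the sum over subsets via prod_add
  have hcollapse : ∑ S : Finset (Fin k), (∏ i ∈ S, w) *
      ((p:ℂ)⁻¹ * ∑ t ∈ Finset.range p, ∏ i ∈ S, F i t)
      = (p:ℂ)⁻¹ * ∑ t ∈ Finset.range p, ∏ i, (w * F i t + 1) := by
    have h1 : ∀ S : Finset (Fin k), (∏ i ∈ S, w) *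
        ((p:ℂ)⁻¹ * ∑ t ∈ Finset.range p, ∏ i ∈ S, F i t)
        = (p:ℂ)⁻¹ * ∑ t ∈ Finset.range p, ∏ i ∈ S, (w * F i t) := by
      intro S
      have hd' : ∀ t:ℕ, ∏ i ∈ S, (w * F i t) = (∏ i ∈ S, w) * ∏ i ∈ S, F i t :=
        fun t => Finset.prod_mul_distrib
      simp_rw [hd', Finset.mul_sum]
      exact Finset.sum_congr rfl fun t _ => by ring
    rw [Finset.sum_congr rfl fun S _ => h1 S, ← Finset.mul_sum, Finset.sum_comm]
    congr 1
    refine Finset.sum_congr rfl fun t _ => ?_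
    rw [Finset.prod_add]
    simp [Finset.powerset_univ]
  rw [hcollapse]
  set c : ℂ := (p:ℂ) * ((p:ℂ) - 1)⁻¹ with hc
  have hfac : ∀ (i : Fin k) (t : ℕ), w * F i t + 1
      = if (p:ℤ) ∣ (d i + t) then 0 else c := by
    intro i t
    by_cases h : (p:ℤ) ∣ (d i + t)
    · rw [hF]; simp only [if_pos h]
      rw [hw]
      field_simp
      norm_num
    · rw [hF]; simp only [if_neg h]
      rw [hw, hc]
      field_simp
      ring
  have hprod : ∀ t : ℕ, ∏ i, (w * F i t + 1)
      = if (∀ i, ¬ (p:ℤ) ∣ (d i + t)) then c ^ k else 0 := by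
    intro t
    by_cases hall : ∀ i, ¬ (p:ℤ) ∣ (d i + t)
    · rw [if_pos hall]
      rw [Finset.prod_congr rfl fun i _ => by rw [hfac i t, if_neg (hall i)]]
      rw [Finset.prod_const, Finset.card_univ, Fintype.card_fin]
    · rw [if_neg hall]
      push_neg at hall
      obtain ⟨i, hi⟩ := hall
      exact Finset.prod_eq_zero (Finset.mem_univ i) (by rw [hfac i t, if_pos hi])
  rw [Finset.sum_congr rfl fun t _ => hprod t, ← Finset.sum_filter,
    Finset.sum_const, nsmul_eq_mul]
  have hiff : ∀ (i : Fin k) (t : ℕ), ((p:ℤ) ∣ d i + t) ↔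
      (d i : ZMod p) = -((t : ℕ) : ZMod p) := by
    intro i t
    rw [← ZMod.intCast_zmod_eq_zero_iff_dvd]
    push_cast
    rw [add_eq_zero_iff_eq_neg]
  have hcard : ((Finset.range p).filter (fun t : ℕ => ∀ i, ¬ (p:ℤ) ∣ (d i + (t:ℤ)))).card
      = p - (Finset.univ.image fun i => ((d i : ZMod p))).card := by
    have h1 : ((Finset.range p).filter (fun t : ℕ => ∀ i, ¬ (p:ℤ) ∣ (d i + (t:ℤ)))).card
        = ((Finset.univ : Finset (ZMod p)).filter
            (fun u => ∀ i, (d i : ZMod p) ≠ -u)).card := by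
      apply Finset.card_nbij (fun t => ((t:ℕ) : ZMod p))
      · intro t ht
        simp only [Finset.mem_coe, Finset.mem_filter, Finset.mem_range] at ht
        simp only [Finset.mem_coe, Finset.mem_filter]
        exact ⟨Finset.mem_univ _, fun i hcon => ht.2 i ((hiff i t).mpr hcon)⟩
      · intro t1 h1' t2 h2' he
        simp only [Finset.coe_filter, Set.mem_setOf_eq, Finset.mem_range] at h1' h2'
        have := congrArg ZMod.val he
        rwa [ZMod.val_cast_of_lt h1'.1, ZMod.val_cast_of_lt h2'.1] at this
      · intro u hu
        simp only [Finset.coe_filter, Finset.mem_univ, true_and, Set.mem_setOf_eq] at hu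
        have hval : ((u.val : ℕ) : ZMod p) = u := ZMod.natCast_rightInverse u
        refine ⟨u.val, ?_, hval⟩
        simp only [Finset.coe_filter, Set.mem_setOf_eq, Finset.mem_range]
        refine ⟨ZMod.val_lt u, fun i hcon => ?_⟩
        have := (hiff i u.val).mp hcon
        rw [hval] at this
        exact hu i this
    rw [h1]
    have h2 : (Finset.univ : Finset (ZMod p)).filter (fun u => ∀ i, (d i : ZMod p) ≠ -u)
        = Finset.univ \ (Finset.univ.image fun i => -(d i : ZMod p)) := by
      ext u
      simp only [Finset.mem_filter, Finset.mem_univ, true_and, Finset.mem_sdiff,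
        Finset.mem_image, not_exists]
      constructor
      · intro h i hi
        exact h i (neg_eq_iff_eq_neg.mp hi)
      · intro h i hi
        exact h i (neg_eq_iff_eq_neg.mpr hi)
    rw [h2, Finset.card_sdiff_of_subset (Finset.subset_univ _), Finset.card_univ, ZMod.card]
    congr 1
    have : (Finset.univ.image fun i => -(d i : ZMod p))
        = (Finset.univ.image fun i => (d i : ZMod p)).image Neg.neg := by
      rw [Finset.image_image]
      rfl
    rw [this, Finset.card_image_of_injective _ neg_injective]
  rw [hcard]
  set ν := (Finset.univ.image fun i => ((d i : ZMod p))).card with hν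
  have hνle : ν ≤ p := le_trans (Finset.card_le_univ _)
    (le_of_eq (ZMod.card p))
  have hcast : ((p - ν : ℕ) : ℂ) = (p:ℂ) - ν := by
    rw [Nat.cast_sub hνle]
  have hinv : (1 - (p:ℂ)⁻¹)⁻¹ = c := by
    rw [hc]
    rw [show (1 - (p:ℂ)⁻¹) = ((p:ℂ) - 1) / p by field_simp, inv_div, div_eq_mul_inv]
  rw [hinv, hcast]
  field_simp
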